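/- Let M be a countably n-rectifiable set in ℝ^{n+k}, T ⊂ ℝ^{n+k} an n-dimensional subspace with orthogonal projection p_T, and ζ ∈ C¹_c(ℝ^{n+k}). Writing x' = x − p_T(x) for x ∈ ℝ^{n+k} and X(x) = ζ²(x)·x', the operator norm of d^M X := DX ∘ P_{T_xM} satisfies ‖d^M X‖ ≤ 2|ζ||∇^M ζ||x'| + c(n,k)·ζ²·|p_{T_xM} − p_T|, where c(n,k) depends only on n and k. -/

import Mathlib

open MeasureTheory Metric Set Filter
open scoped ENNReal Topology RealInnerProductSpace

set_option maxHeartbeats 1000000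

variable {E : Type*} [NormedAddCommGroup E] [InnerProductSpace ℝ E] [FiniteDimensional ℝ E]

lemma trace_eq_sum_norm_sq (A : E →L[ℝ] E) (hA : IsSelfAdjoint A) :
    LinearMap.trace ℝ E ((A.comp A : E →L[ℝ] E) : E →ₗ[ℝ] E)
      = ∑ i, ‖A (stdOrthonormalBasis ℝ E i)‖ ^ 2 := by
  set b := stdOrthonormalBasis ℝ E
  rw [LinearMap.trace_eq_matrix_trace ℝ b.toBasis, Matrix.trace]
  congr 1
  ext i
  rw [Matrix.diag, LinearMap.toMatrix_apply, b.coe_toBasis_repr_apply, b.coe_toBasis]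
  have h := hA.isSymmetric (b i) (A (b i))
  simp only [ContinuousLinearMap.coe_coe] at h
  simp only [ContinuousLinearMap.coe_coe, ContinuousLinearMap.comp_apply,
    b.repr_apply_apply]
  rw [← h, real_inner_self_eq_norm_sq]

lemma opNorm_le_sqrt_sum (A : E →L[ℝ] E) :
    ‖A‖ ≤ Real.sqrt (∑ i, ‖A (stdOrthonormalBasis ℝ E i)‖ ^ 2) := by
  set b := stdOrthonormalBasis ℝ E
  refine A.opNorm_le_bound (Real.sqrt_nonneg _) fun v => ?_
  have hv : A v = ∑ i, b.repr v i • A (b i) := by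
    conv_lhs => rw [← b.sum_repr v]
    rw [map_sum]; simp
  have hnv : ‖v‖ = Real.sqrt (∑ i, |b.repr v i| ^ 2) := by
    rw [← b.repr.norm_map v, EuclideanSpace.norm_eq]
    simp [Real.norm_eq_abs]
  calc ‖A v‖ ≤ ∑ i, |b.repr v i| * ‖A (b i)‖ := by
        rw [hv]
        refine (norm_sum_le _ _).trans_eq ?_
        simp [norm_smul]
    _ ≤ Real.sqrt (∑ i, |b.repr v i| ^ 2) * Real.sqrt (∑ i, ‖A (b i)‖ ^ 2) := by
        rw [← Real.sqrt_mul (by positivity)]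
        have h := Finset.sum_mul_sq_le_sq_mul_sq Finset.univ
          (fun i => |b.repr v i|) (fun i => ‖A (b i)‖)
        have h0 : (0:ℝ) ≤ ∑ i, |b.repr v i| * ‖A (b i)‖ := by positivity
        nlinarith [Real.sq_sqrt (mul_nonneg (by positivity : (0:ℝ) ≤ ∑ i, |b.repr v i| ^ 2)
          (by positivity : (0:ℝ) ≤ ∑ i, ‖A (b i)‖ ^ 2)),
          Real.sqrt_nonneg ((∑ i, |b.repr v i| ^ 2) * ∑ i, ‖A (b i)‖ ^ 2)]
    _ = Real.sqrt (∑ i, ‖A (b i)‖ ^ 2) * ‖v‖ := by rw [hnv, mul_comm]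

lemma opNorm_le_sqrt_trace (A : E →L[ℝ] E) (hA : IsSelfAdjoint A) :
    ‖A‖ ≤ Real.sqrt (LinearMap.trace ℝ E ((A.comp A : E →L[ℝ] E) : E →ₗ[ℝ] E)) := by
  rw [trace_eq_sum_norm_sq A hA]; exact opNorm_le_sqrt_sum A


/-- Euclidean space `ℝ^m`. -/
abbrev Euc (m : ℕ) := EuclideanSpace ℝ (Fin m)

/-- There is a constant `c = c(n,k)` such that for any
`n`-dimensional subspaces `T` (the reference plane) and `Tx` (the approximate
tangent space `T_xM` of a countably `n`-rectifiable set at `x`), any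
`ζ ∈ C¹_c(ℝ^{n+k})`, and `X(y) = ζ(y)²·(y − p_T y)` (so `x' = x − p_T x`),
`‖d^M X‖ = ‖DX(x) ∘ P_{T_xM}‖
  ≤ 2|ζ||∇^Mζ||x'| + c·ζ²·|p_{T_xM} − p_T|`,
where `|p_{T_xM} − p_T| = √(tr((P_{T_xM} − P_T)²))` is the Frobenius distance. -/
theorem stmt12 (n k : ℕ) :
    ∃ c : ℝ, 0 < c ∧
      ∀ (T Tx : Submodule ℝ (Euc (n + k))),
        Module.finrank ℝ T = n → Module.finrank ℝ Tx = n →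
        ∀ (PT PTx : Euc (n + k) →L[ℝ] Euc (n + k)),
          PT = T.subtypeL.comp T.orthogonalProjectionOnto →
          PTx = Tx.subtypeL.comp Tx.orthogonalProjectionOnto →
        ∀ ζ : Euc (n + k) → ℝ, ContDiff ℝ 1 ζ → HasCompactSupport ζ →
        ∀ (X : Euc (n + k) → Euc (n + k)),
          X = (fun y => (ζ y) ^ 2 • (y - PT y)) →
        ∀ x : Euc (n + k),
          ‖(fderiv ℝ X x).comp PTx‖
            ≤ 2 * |ζ x| * ‖PTx (gradient ζ x)‖ * ‖x - PT x‖
              + c * (ζ x) ^ 2 *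
                Real.sqrt (LinearMap.trace ℝ (Euc (n + k))
                  (((PTx - PT).comp (PTx - PT)) : Euc (n + k) →ₗ[ℝ] Euc (n + k))) := by
  refine ⟨2, two_pos, fun T Tx hT hTx PT PTx hPT hPTx ζ hζ hζc X hX x => ?_⟩
  -- self-adjointness
  have hsaT : IsSelfAdjoint PT := by rw [hPT]; exact isSelfAdjoint_starProjection T
  have hsaTx : IsSelfAdjoint PTx := by rw [hPTx]; exact isSelfAdjoint_starProjection Tx
  have hsaA : IsSelfAdjoint (PTx - PT) := by
    rw [IsSelfAdjoint, ContinuousLinearMap.star_eq_adjoint, map_sub,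
      ← ContinuousLinearMap.star_eq_adjoint, ← ContinuousLinearMap.star_eq_adjoint,
      hsaTx.star_eq, hsaT.star_eq]
  -- derivative of ζ
  have hζd : HasFDerivAt ζ (fderiv ℝ ζ x) x :=
    ((hζ.differentiable one_ne_zero) x).hasFDerivAt
  set f1 : Euc (n + k) →L[ℝ] ℝ := fderiv ℝ ζ x with hf1
  -- derivative of X
  have hsub : HasFDerivAt (fun y : Euc (n + k) => y - PT y)
      (ContinuousLinearMap.id ℝ (Euc (n + k)) - PT) x := (hasFDerivAt_id x).sub PT.hasFDerivAt
  have hsq : HasFDerivAt (fun y => ζ y ^ 2) ((2 * ζ x) • f1) x := by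
    have := hζd.mul hζd
    have h2 : (fun y => ζ y ^ 2) = fun y => ζ y * ζ y := by ext y; ring
    rw [h2, two_mul, add_smul]; exact this
  have hXd : HasFDerivAt X
      ((ζ x ^ 2) • (ContinuousLinearMap.id ℝ (Euc (n + k)) - PT)
        + ((2 * ζ x) • f1).smulRight (x - PT x)) x := by
    rw [hX]; exact hsq.smul hsub
  rw [hXd.fderiv]
  -- split
  rw [ContinuousLinearMap.add_comp]
  refine (norm_add_le _ _).trans ?_
  have idem : PT.comp PT = PT := by
    rw [hPT]; ext v
    simp only [ContinuousLinearMap.comp_apply, Submodule.subtypeL_apply,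
      Submodule.orthogonalProjectionOnto_mem_subspace_eq_self]
  -- second projection term
  have hkey : (ContinuousLinearMap.id ℝ (Euc (n + k)) - PT).comp PTx
      = (ContinuousLinearMap.id ℝ (Euc (n + k)) - PT).comp (PTx - PT) := by
    simp only [ContinuousLinearMap.comp_sub, ContinuousLinearMap.sub_comp,
      ContinuousLinearMap.id_comp, idem, sub_self, sub_zero]
  have hPTnorm : ‖ContinuousLinearMap.id ℝ (Euc (n + k)) - PT‖ ≤ 2 := by
    refine (norm_sub_le _ _).trans ?_
    have h1 : ‖(ContinuousLinearMap.id ℝ (Euc (n + k)))‖ ≤ 1 := ContinuousLinearMap.norm_id_le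
    have h2 : ‖PT‖ ≤ 1 := by
      refine PT.opNorm_le_bound zero_le_one fun v => ?_
      rw [one_mul, hPT]
      simp only [ContinuousLinearMap.comp_apply, Submodule.subtypeL_apply,
        Submodule.coe_norm]
      exact ((T.orthogonalProjectionOnto).le_opNorm v).trans
        (mul_le_of_le_one_left (norm_nonneg v) (Submodule.orthogonalProjectionOnto_norm_le T))
    linarith
  have hterm2 : ‖((ζ x ^ 2) • (ContinuousLinearMap.id ℝ (Euc (n + k)) - PT)).comp PTx‖
      ≤ 2 * ζ x ^ 2 * Real.sqrt (LinearMap.trace ℝ (Euc (n + k))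
          (((PTx - PT).comp (PTx - PT)) : Euc (n + k) →ₗ[ℝ] Euc (n + k))) := by
    rw [ContinuousLinearMap.smul_comp, hkey,
      norm_smul (ζ x ^ 2) ((ContinuousLinearMap.id ℝ (Euc (n + k)) - PT).comp (PTx - PT))]
    have := ((ContinuousLinearMap.id ℝ (Euc (n + k)) - PT).opNorm_comp_le (PTx - PT))
    have hA := opNorm_le_sqrt_trace (PTx - PT) hsaA
    have hsq2 : ‖(ζ x ^ 2 : ℝ)‖ = ζ x ^ 2 := by
      rw [Real.norm_eq_abs, abs_of_nonneg (sq_nonneg _)]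
    rw [hsq2]
    have hB : ‖(ContinuousLinearMap.id ℝ (Euc (n + k)) - PT).comp (PTx - PT)‖
        ≤ 2 * Real.sqrt (LinearMap.trace ℝ (Euc (n + k))
          (((PTx - PT).comp (PTx - PT)) : Euc (n + k) →ₗ[ℝ] Euc (n + k))) :=
      this.trans (mul_le_mul hPTnorm hA (norm_nonneg _) (by norm_num))
    have := mul_le_mul_of_nonneg_left hB (sq_nonneg (ζ x))
    linarith [this]
  -- first (gradient) term
  have hgrad : f1.comp PTx = innerSL ℝ (PTx (gradient ζ x)) := by
    ext v
    have h1 : ∀ w : Euc (n + k), f1 w = ⟪gradient ζ x, w⟫ := by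
      intro w
      rw [gradient]
      exact (InnerProductSpace.toDual_symm_apply).symm
    simp only [ContinuousLinearMap.comp_apply, innerSL_apply_apply]
    rw [h1 (PTx v)]
    exact (hsaTx.isSymmetric (gradient ζ x) v).symm
  have hterm1 : ‖(((2 * ζ x) • f1).smulRight (x - PT x)).comp PTx‖
      = 2 * |ζ x| * ‖PTx (gradient ζ x)‖ * ‖x - PT x‖ := by
    have hc : (((2 * ζ x) • f1).smulRight (x - PT x)).comp PTx
        = ((2 * ζ x) • (f1.comp PTx)).smulRight (x - PT x) := by
      ext v; simp
    rw [hc, ContinuousLinearMap.norm_smulRight_apply, norm_smul (2 * ζ x) (f1.comp PTx), hgrad,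
      innerSL_apply_norm, Real.norm_eq_abs, abs_mul, abs_two]
    try ring
  linarith [hterm1, hterm2, norm_nonneg ((((2 * ζ x) • f1).smulRight (x - PT x)).comp PTx)]
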